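/- For every n ≥ 1 and real parameters m_{ij}^{(±)} (i,j = 1,…,n), the (2n)²×(2n)² matrix R̂(θ) = Σ_{ε=±} Σ_{i,j=1}^n e^{m_{ij}^{(ε)} θ} (P_{ij}^{(ε)} + P_{i j̄}^{(ε)}) satisfies the braid equation R̂₁₂(θ) R̂₂₃(θ+θ') R̂₁₂(θ') = R̂₂₃(θ') R̂₁₂(θ+θ') R̂₂₃(θ) for all real θ, θ'. -/

import Mathlib

open Matrix Kronecker

def elemMat (n : ℕ) (a b : Fin (2 * n)) : Matrix (Fin (2 * n)) (Fin (2 * n)) ℝ :=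
  Matrix.single a b 1

def emb (n : ℕ) (i : Fin n) : Fin (2 * n) := ⟨i.val, by omega⟩

def barEmb (n : ℕ) (i : Fin n) : Fin (2 * n) := ⟨2 * n - 1 - i.val, by omega⟩

def bar (n : ℕ) (a : Fin (2 * n)) : Fin (2 * n) := ⟨2 * n - 1 - a.val, by omega⟩

def idx (n : ℕ) (a : Fin (2 * n)) : Fin n :=
  if h : a.val < n then ⟨a.val, h⟩ else ⟨2 * n - 1 - a.val, by omega⟩

@[simp] lemma bar_bar (n : ℕ) (a : Fin (2 * n)) : bar n (bar n a) = a := by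
  simp [bar, Fin.ext_iff]; omega

@[simp] lemma idx_bar (n : ℕ) (a : Fin (2 * n)) : idx n (bar n a) = idx n a := by
  have := a.isLt
  simp only [idx]
  split_ifs <;> simp [bar, Fin.ext_iff] at * <;> have hb : (bar n a).val = 2 * n - 1 - a.val := rfl <;> omega

lemma bar_ne (n : ℕ) (a : Fin (2 * n)) : bar n a ≠ a := by
  simp [bar, Fin.ext_iff]; omega

@[simp] lemma bar_emb (n : ℕ) (i : Fin n) : bar n (emb n i) = barEmb n i := rfl
@[simp] lemma bar_barEmb (n : ℕ) (i : Fin n) : bar n (barEmb n i) = emb n i := by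
  simp [bar, barEmb, emb, Fin.ext_iff]; omega
@[simp] lemma idx_emb (n : ℕ) (i : Fin n) : idx n (emb n i) = i := by
  simp [idx, emb]
@[simp] lemma idx_barEmb (n : ℕ) (i : Fin n) : idx n (barEmb n i) = i := by
  have := i.isLt
  simp only [idx]
  split_ifs <;> simp [barEmb, Fin.ext_iff] at * <;> have hb : (barEmb n i).val = 2 * n - 1 - i.val := rfl <;> omega

lemma emb_or_barEmb (n : ℕ) (a : Fin (2 * n)) :
    (a = emb n (idx n a) ∧ bar n a = barEmb n (idx n a)) ∨
    (a = barEmb n (idx n a) ∧ bar n a = emb n (idx n a)) := by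
  have := a.isLt
  by_cases h : a.val < n
  · left; constructor <;> simp [idx, emb, barEmb, bar, Fin.ext_iff, h]
  · right; constructor <;> simp [idx, emb, barEmb, bar, Fin.ext_iff, h] <;> omega

@[simp] lemma bar_ne_self (n : ℕ) (a : Fin (2 * n)) : bar n a = a ↔ False := by
  simp [bar, Fin.ext_iff]; omega
@[simp] lemma self_ne_bar (n : ℕ) (a : Fin (2 * n)) : a = bar n a ↔ False := by
  simp [bar, Fin.ext_iff]; omega

noncomputable def Pproj (n : ℕ) (ε : ℝ) (i j : Fin n) :
    Matrix (Fin (2 * n) × Fin (2 * n)) (Fin (2 * n) × Fin (2 * n)) ℝ :=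
  (1 / 2 : ℝ) •
    (elemMat n (emb n i) (emb n i) ⊗ₖ elemMat n (emb n j) (emb n j)
      + elemMat n (barEmb n i) (barEmb n i) ⊗ₖ elemMat n (barEmb n j) (barEmb n j)
      + ε • (elemMat n (emb n i) (barEmb n i) ⊗ₖ elemMat n (emb n j) (barEmb n j)
          + elemMat n (barEmb n i) (emb n i) ⊗ₖ elemMat n (barEmb n j) (emb n j)))

noncomputable def PprojBar (n : ℕ) (ε : ℝ) (i j : Fin n) :
    Matrix (Fin (2 * n) × Fin (2 * n)) (Fin (2 * n) × Fin (2 * n)) ℝ :=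
  (1 / 2 : ℝ) •
    (elemMat n (emb n i) (emb n i) ⊗ₖ elemMat n (barEmb n j) (barEmb n j)
      + elemMat n (barEmb n i) (barEmb n i) ⊗ₖ elemMat n (emb n j) (emb n j)
      + ε • (elemMat n (emb n i) (barEmb n i) ⊗ₖ elemMat n (barEmb n j) (emb n j)
          + elemMat n (barEmb n i) (emb n i) ⊗ₖ elemMat n (emb n j) (barEmb n j)))

noncomputable def Rhat (n : ℕ) (mp mm : Fin n → Fin n → ℝ) (θ : ℝ) :
    Matrix (Fin (2 * n) × Fin (2 * n)) (Fin (2 * n) × Fin (2 * n)) ℝ :=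
  ∑ i : Fin n, ∑ j : Fin n,
    (Real.exp (mp i j * θ) • (Pproj n 1 i j + PprojBar n 1 i j)
      + Real.exp (mm i j * θ) • (Pproj n (-1) i j + PprojBar n (-1) i j))

noncomputable def Cf (n : ℕ) (mp mm : Fin n → Fin n → ℝ) (a b : Fin (2 * n)) (θ : ℝ) : ℝ :=
  (Real.exp (mp (idx n a) (idx n b) * θ) + Real.exp (mm (idx n a) (idx n b) * θ)) / 2

noncomputable def Sf (n : ℕ) (mp mm : Fin n → Fin n → ℝ) (a b : Fin (2 * n)) (θ : ℝ) : ℝ :=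
  (Real.exp (mp (idx n a) (idx n b) * θ) - Real.exp (mm (idx n a) (idx n b) * θ)) / 2

@[simp] lemma emb_ne_barEmb (n : ℕ) (i j : Fin n) : emb n i = barEmb n j ↔ False := by
  have := i.isLt; have := j.isLt
  simp [emb, barEmb, Fin.ext_iff]; omega

@[simp] lemma barEmb_ne_emb (n : ℕ) (i j : Fin n) : barEmb n i = emb n j ↔ False := by
  have := i.isLt; have := j.isLt
  simp [emb, barEmb, Fin.ext_iff]; omega

lemma entry_core (n : ℕ) (mp mm : Fin n → Fin n → ℝ) (θ : ℝ) (i j : Fin n)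
    (a b c d : Fin (2 * n))
    (ha : a = emb n i ∨ a = barEmb n i) (hb : b = emb n j ∨ b = barEmb n j) :
    (Real.exp (mp i j * θ) • (Pproj n 1 i j + PprojBar n 1 i j)
      + Real.exp (mm i j * θ) • (Pproj n (-1) i j + PprojBar n (-1) i j)) (a, b) (c, d)
    = (if a = c ∧ b = d then
          (Real.exp (mp i j * θ) + Real.exp (mm i j * θ)) / 2 else 0)
      + (if bar n a = c ∧ bar n b = d then
          (Real.exp (mp i j * θ) - Real.exp (mm i j * θ)) / 2 else 0) := by
  rcases ha with ha | ha <;> rcases hb with hb | hb <;> subst ha <;> subst hb <;>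
    simp only [Pproj, PprojBar, elemMat, Matrix.add_apply, Matrix.smul_apply,
      Matrix.kroneckerMap_apply, Matrix.single, Matrix.of_apply, smul_eq_mul,
      bar_emb, bar_barEmb, eq_self_iff_true, true_and, and_true,
      emb_ne_barEmb, barEmb_ne_emb, false_and, and_false, if_false, if_true, ite_and] <;>
    split_ifs <;>
    first
      | ring1
      | (simp_all <;> ring)
      | (exfalso; simp only [emb, barEmb, Fin.ext_iff, Fin.mk.injEq] at *; omega)

lemma entry_zero_left (n : ℕ) (mp mm : Fin n → Fin n → ℝ) (θ : ℝ) (i j : Fin n)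
    (a b c d : Fin (2 * n)) (h : i ≠ idx n a) :
    (Real.exp (mp i j * θ) • (Pproj n 1 i j + PprojBar n 1 i j)
      + Real.exp (mm i j * θ) • (Pproj n (-1) i j + PprojBar n (-1) i j)) (a, b) (c, d) = 0 := by
  have h1 : ¬(emb n i = a) := fun hh => h (by rw [← hh, idx_emb])
  have h2 : ¬(barEmb n i = a) := fun hh => h (by rw [← hh, idx_barEmb])
  simp [Pproj, PprojBar, elemMat, Matrix.single, h1, h2]

lemma entry_zero_right (n : ℕ) (mp mm : Fin n → Fin n → ℝ) (θ : ℝ) (i j : Fin n)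
    (a b c d : Fin (2 * n)) (h : j ≠ idx n b) :
    (Real.exp (mp i j * θ) • (Pproj n 1 i j + PprojBar n 1 i j)
      + Real.exp (mm i j * θ) • (Pproj n (-1) i j + PprojBar n (-1) i j)) (a, b) (c, d) = 0 := by
  have h1 : ¬(emb n j = b) := fun hh => h (by rw [← hh, idx_emb])
  have h2 : ¬(barEmb n j = b) := fun hh => h (by rw [← hh, idx_barEmb])
  simp [Pproj, PprojBar, elemMat, Matrix.single, h1, h2]

lemma rhat_apply (n : ℕ) (mp mm : Fin n → Fin n → ℝ) (θ : ℝ) (a b c d : Fin (2 * n)) :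
    Rhat n mp mm θ (a, b) (c, d)
      = (if a = c ∧ b = d then Cf n mp mm a b θ else 0)
        + (if bar n a = c ∧ bar n b = d then Sf n mp mm a b θ else 0) := by
  simp only [Rhat, Matrix.sum_apply]
  rw [Finset.sum_eq_single (idx n a)]
  · rw [Finset.sum_eq_single (idx n b)]
    · have ha : a = emb n (idx n a) ∨ a = barEmb n (idx n a) := by
        rcases emb_or_barEmb n a with ⟨h, _⟩ | ⟨h, _⟩ <;> [left; right] <;> exact h
      have hb : b = emb n (idx n b) ∨ b = barEmb n (idx n b) := by
        rcases emb_or_barEmb n b with ⟨h, _⟩ | ⟨h, _⟩ <;> [left; right] <;> exact h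
      simpa [Cf, Sf] using entry_core n mp mm θ (idx n a) (idx n b) a b c d ha hb
    · intro j _ hj
      exact entry_zero_right n mp mm θ _ j a b c d hj
    · intro h; exact absurd (Finset.mem_univ _) h
  · intro i _ hi
    exact Finset.sum_eq_zero fun j _ => entry_zero_left n mp mm θ i j a b c d hi
  · intro h; exact absurd (Finset.mem_univ _) h

noncomputable def R12 (n : ℕ) (mp mm : Fin n → Fin n → ℝ) (θ : ℝ) :
    Matrix (Fin (2 * n) × Fin (2 * n) × Fin (2 * n)) (Fin (2 * n) × Fin (2 * n) × Fin (2 * n)) ℝ :=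
  Matrix.of fun p q =>
    Rhat n mp mm θ (p.1, p.2.1) (q.1, q.2.1) * (if p.2.2 = q.2.2 then 1 else 0)

noncomputable def R23 (n : ℕ) (mp mm : Fin n → Fin n → ℝ) (θ : ℝ) :
    Matrix (Fin (2 * n) × Fin (2 * n) × Fin (2 * n)) (Fin (2 * n) × Fin (2 * n) × Fin (2 * n)) ℝ :=
  Matrix.of fun p q =>
    (if p.1 = q.1 then 1 else 0) * Rhat n mp mm θ p.2 q.2

def f12 (n : ℕ) (p : Fin (2 * n) × Fin (2 * n) × Fin (2 * n)) :
    Fin (2 * n) × Fin (2 * n) × Fin (2 * n) := (bar n p.1, bar n p.2.1, p.2.2)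

def f23 (n : ℕ) (p : Fin (2 * n) × Fin (2 * n) × Fin (2 * n)) :
    Fin (2 * n) × Fin (2 * n) × Fin (2 * n) := (p.1, bar n p.2.1, bar n p.2.2)

@[simp] lemma Cf_bar_left (n : ℕ) (mp mm : Fin n → Fin n → ℝ) (a b : Fin (2 * n)) (θ : ℝ) :
    Cf n mp mm (bar n a) b θ = Cf n mp mm a b θ := by simp [Cf]
@[simp] lemma Cf_bar_right (n : ℕ) (mp mm : Fin n → Fin n → ℝ) (a b : Fin (2 * n)) (θ : ℝ) :
    Cf n mp mm a (bar n b) θ = Cf n mp mm a b θ := by simp [Cf]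
@[simp] lemma Sf_bar_left (n : ℕ) (mp mm : Fin n → Fin n → ℝ) (a b : Fin (2 * n)) (θ : ℝ) :
    Sf n mp mm (bar n a) b θ = Sf n mp mm a b θ := by simp [Sf]
@[simp] lemma Sf_bar_right (n : ℕ) (mp mm : Fin n → Fin n → ℝ) (a b : Fin (2 * n)) (θ : ℝ) :
    Sf n mp mm a (bar n b) θ = Sf n mp mm a b θ := by simp [Sf]

lemma bar_eq_left (n : ℕ) (a b : Fin (2 * n)) : bar n a = b ↔ a = bar n b := by
  constructor <;> (rintro rfl; simp)

lemma bar_eq_sym (n : ℕ) (a b : Fin (2 * n)) : a = bar n b ↔ b = bar n a := by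
  constructor <;> (rintro rfl; simp)

@[simp] lemma bar_inj (n : ℕ) (a b : Fin (2 * n)) : bar n a = bar n b ↔ a = b := by
  simp [bar, Fin.ext_iff]; omega

lemma R12_row (n : ℕ) (mp mm : Fin n → Fin n → ℝ) (θ : ℝ) (p r) :
    R12 n mp mm θ p r
      = (if r = p then Cf n mp mm p.1 p.2.1 θ else 0)
        + (if r = f12 n p then Sf n mp mm p.1 p.2.1 θ else 0) := by
  obtain ⟨p1, p2, p3⟩ := p; obtain ⟨r1, r2, r3⟩ := r
  simp only [R12, Matrix.of_apply, rhat_apply, f12, Prod.mk.injEq]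
  by_cases h1 : p1 = r1 <;> by_cases h2 : p2 = r2 <;> by_cases h3 : p3 = r3 <;>
    by_cases h4 : bar n p1 = r1 <;> by_cases h5 : bar n p2 = r2 <;>
    simp_all [eq_comm] <;> ring

lemma R12_col (n : ℕ) (mp mm : Fin n → Fin n → ℝ) (θ : ℝ) (q r) :
    R12 n mp mm θ r q
      = (if r = q then Cf n mp mm q.1 q.2.1 θ else 0)
        + (if r = f12 n q then Sf n mp mm q.1 q.2.1 θ else 0) := by
  obtain ⟨q1, q2, q3⟩ := q; obtain ⟨r1, r2, r3⟩ := r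
  simp only [R12, Matrix.of_apply, rhat_apply, f12, Prod.mk.injEq]
  by_cases h1 : r1 = q1 <;> by_cases h2 : r2 = q2 <;> by_cases h3 : r3 = q3 <;>
    by_cases h4 : r1 = bar n q1 <;> by_cases h5 : r2 = bar n q2 <;>
    simp_all [eq_comm, bar_eq_sym] <;> ring

lemma R23_row (n : ℕ) (mp mm : Fin n → Fin n → ℝ) (θ : ℝ) (p r) :
    R23 n mp mm θ p r
      = (if r = p then Cf n mp mm p.2.1 p.2.2 θ else 0)
        + (if r = f23 n p then Sf n mp mm p.2.1 p.2.2 θ else 0) := by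
  obtain ⟨p1, p2, p3⟩ := p; obtain ⟨r1, r2, r3⟩ := r
  simp only [R23, Matrix.of_apply, rhat_apply, f23, Prod.mk.injEq]
  by_cases h1 : p1 = r1 <;> by_cases h2 : p2 = r2 <;> by_cases h3 : p3 = r3 <;>
    by_cases h4 : bar n p2 = r2 <;> by_cases h5 : bar n p3 = r3 <;>
    simp_all [eq_comm] <;> ring

lemma R23_col (n : ℕ) (mp mm : Fin n → Fin n → ℝ) (θ : ℝ) (q r) :
    R23 n mp mm θ r q
      = (if r = q then Cf n mp mm q.2.1 q.2.2 θ else 0)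
        + (if r = f23 n q then Sf n mp mm q.2.1 q.2.2 θ else 0) := by
  obtain ⟨q1, q2, q3⟩ := q; obtain ⟨r1, r2, r3⟩ := r
  simp only [R23, Matrix.of_apply, rhat_apply, f23, Prod.mk.injEq]
  by_cases h1 : r1 = q1 <;> by_cases h2 : r2 = q2 <;> by_cases h3 : r3 = q3 <;>
    by_cases h4 : r2 = bar n q2 <;> by_cases h5 : r3 = bar n q3 <;>
    simp_all [eq_comm, bar_eq_sym] <;> ring

lemma mul_row {ι : Type*} [Fintype ι] [DecidableEq ι] (A B : Matrix ι ι ℝ)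
    (p u1 u2 : ι) (c1 c2 : ℝ)
    (hA : ∀ r, A p r = (if r = u1 then c1 else 0) + (if r = u2 then c2 else 0)) (q : ι) :
    (A * B) p q = c1 * B u1 q + c2 * B u2 q := by
  rw [Matrix.mul_apply]
  simp [hA, add_mul, ite_mul, Finset.sum_add_distrib, Finset.sum_ite_eq']

lemma mul_col {ι : Type*} [Fintype ι] [DecidableEq ι] (A B : Matrix ι ι ℝ)
    (q u1 u2 : ι) (d1 d2 : ℝ)
    (hB : ∀ r, B r q = (if r = u1 then d1 else 0) + (if r = u2 then d2 else 0)) (p : ι) :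
    (A * B) p q = A p u1 * d1 + A p u2 * d2 := by
  rw [Matrix.mul_apply]
  simp [hB, mul_add, mul_ite, Finset.sum_add_distrib, Finset.sum_ite_eq']

set_option maxHeartbeats 1600000 in
theorem braid_equation_multiparameter (n : ℕ) (hn : 1 ≤ n)
    (mp mm : Fin n → Fin n → ℝ) (θ θ' : ℝ) :
    R12 n mp mm θ * R23 n mp mm (θ + θ') * R12 n mp mm θ'
      = R23 n mp mm θ' * R12 n mp mm (θ + θ') * R23 n mp mm θ := by
  apply Matrix.ext
  intro p q
  obtain ⟨a, b, c⟩ := p; obtain ⟨x, y, z⟩ := q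
  rw [mul_col _ _ _ _ _ _ _ (fun r => R12_col n mp mm θ' (x, y, z) r),
      mul_col _ _ _ _ _ _ _ (fun r => R23_col n mp mm θ (x, y, z) r),
      mul_row _ _ _ _ _ _ _ (fun r => R12_row n mp mm θ (a, b, c) r),
      mul_row _ _ _ _ _ _ _ (fun r => R12_row n mp mm θ (a, b, c) r),
      mul_row _ _ _ _ _ _ _ (fun r => R23_row n mp mm θ' (a, b, c) r),
      mul_row _ _ _ _ _ _ _ (fun r => R23_row n mp mm θ' (a, b, c) r),
      R23_row, R23_row, R23_row, R23_row, R12_row, R12_row, R12_row, R12_row]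
  simp only [f12, f23, Prod.mk.injEq, bar_bar, bar_inj, bar_eq_left,
    Cf_bar_left, Cf_bar_right, Sf_bar_left, Sf_bar_right]
  by_cases hx : x = a <;> by_cases hx' : x = bar n a <;>
    by_cases hy : y = b <;> by_cases hy' : y = bar n b <;>
    by_cases hz : z = c <;> by_cases hz' : z = bar n c <;>
    simp_all only [self_ne_bar, bar_ne_self, bar_bar, bar_inj, eq_self_iff_true,
      if_true, if_false, true_and, and_true, false_and, and_false, not_true,
      not_false_iff, add_zero, zero_add, mul_zero, zero_mul, iff_false,
      Cf_bar_left, Cf_bar_right, Sf_bar_left, Sf_bar_right] <;>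
    simp only [Cf, Sf, mul_add, Real.exp_add] <;> ring
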